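/- Let p, K ≥ 1, and for each α : Fin K and i : Fin p let A α i be a symmetric real n × n matrix. Define f : (Fin n → ℝ) → ℝ by f x = (1/2) · Σ_{α} ∏_{i} (x ⬝ᵥ (A α i *ᵥ x)), D x = Σ_{α} Σ_{j} (∏_{i ≠ j} x ⬝ᵥ (A α i *ᵥ x)) • (A α j), and the Hessian matrix H x = 2 · Σ_{α} Σ_{j ≠ k} (∏_{i ≠ j, i ≠ k} x ⬝ᵥ (A α i *ᵥ x)) • vecMulVec ((A α k) *ᵥ x) ((A α j) *ᵥ x) + D x. Then f is twice differentiable and for all x and all directions u, w, the second Fréchet derivative satisfies iteratedFDeriv ℝ 2 f x ![u, w] = u ⬝ᵥ ((H x) *ᵥ w). -/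

import Mathlib

open Matrix

section helpers

variable {n : ℕ}

/-- dot product with a fixed vector on the left, as a continuous linear map. -/
noncomputable def dotCLM (v : Fin n → ℝ) : (Fin n → ℝ) →L[ℝ] ℝ :=
  LinearMap.toContinuousLinearMap
    { toFun := fun w => v ⬝ᵥ w
      map_add' := fun a b => dotProduct_add v a b
      map_smul' := fun c a => by simp [dotProduct_smul] }

@[simp] lemma dotCLM_apply (v w : Fin n → ℝ) : dotCLM v w = v ⬝ᵥ w := rfl

/-- `dotCLM` bundled as a continuous linear map in its vector argument. -/
noncomputable def dotCLML : (Fin n → ℝ) →L[ℝ] (Fin n → ℝ) →L[ℝ] ℝ :=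
  LinearMap.toContinuousLinearMap
    { toFun := dotCLM
      map_add' := fun a b => by ext w; simp [add_dotProduct]
      map_smul' := fun c a => by ext w; simp [smul_dotProduct] }

@[simp] lemma dotCLML_apply (v w : Fin n → ℝ) : dotCLML v w = v ⬝ᵥ w := rfl

/-- matrix-vector multiplication as a continuous linear map. -/
noncomputable def mulVecCLM (M : Matrix (Fin n) (Fin n) ℝ) : (Fin n → ℝ) →L[ℝ] (Fin n → ℝ) :=
  LinearMap.toContinuousLinearMap M.mulVecLin

@[simp] lemma mulVecCLM_apply (M : Matrix (Fin n) (Fin n) ℝ) (v : Fin n → ℝ) :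
    mulVecCLM M v = M *ᵥ v := rfl

lemma sum_mulVec' {ι : Type*} (s : Finset ι) (M : ι → Matrix (Fin n) (Fin n) ℝ)
    (v : Fin n → ℝ) : (∑ i ∈ s, M i) *ᵥ v = ∑ i ∈ s, M i *ᵥ v := by
  ext j
  simp only [Matrix.mulVec, dotProduct, Finset.sum_apply, Matrix.sum_apply,
    Finset.sum_mul]
  exact Finset.sum_comm

lemma dotProduct_sum' {ι : Type*} (s : Finset ι) (u : Fin n → ℝ) (v : ι → Fin n → ℝ) :
    u ⬝ᵥ (∑ i ∈ s, v i) = ∑ i ∈ s, u ⬝ᵥ v i := by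
  simp only [dotProduct, Finset.sum_apply, Finset.mul_sum]
  exact Finset.sum_comm

lemma sum_dotProduct' {ι : Type*} (s : Finset ι) (v : ι → Fin n → ℝ) (u : Fin n → ℝ) :
    (∑ i ∈ s, v i) ⬝ᵥ u = ∑ i ∈ s, v i ⬝ᵥ u := by
  simp only [dotProduct, Finset.sum_apply, Finset.sum_mul]
  exact Finset.sum_comm

lemma vecMulVec_mulVec' (a b w : Fin n → ℝ) :
    vecMulVec a b *ᵥ w = (b ⬝ᵥ w) • a := by
  ext i
  simp only [Matrix.mulVec, Matrix.vecMulVec_apply, dotProduct, Pi.smul_apply,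
    smul_eq_mul, Finset.sum_mul]
  exact Finset.sum_congr rfl fun j _ => by ring

lemma symm_dot (M : Matrix (Fin n) (Fin n) ℝ) (hM : Mᵀ = M) (u w : Fin n → ℝ) :
    u ⬝ᵥ (M *ᵥ w) = (M *ᵥ u) ⬝ᵥ w := by
  rw [Matrix.dotProduct_mulVec, ← Matrix.mulVec_transpose, hM]

lemma hasFDerivAt_quad (M : Matrix (Fin n) (Fin n) ℝ) (hM : Mᵀ = M) (x : Fin n → ℝ) :
    HasFDerivAt (fun y => y ⬝ᵥ (M *ᵥ y)) ((2 : ℝ) • dotCLM (M *ᵥ x)) x := by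
  have h := (dotCLML (n := n)).hasFDerivAt_of_bilinear (hasFDerivAt_id x)
    (mulVecCLM M).hasFDerivAt
  refine h.congr_fderiv ?_
  ext w
  simp only [ContinuousLinearMap.add_apply, ContinuousLinearMap.precompR_apply,
    ContinuousLinearMap.precompL_apply, ContinuousLinearMap.coe_id', id_eq,
    ContinuousLinearMap.compL_apply, ContinuousLinearMap.coe_comp', Function.comp_apply,
    ContinuousLinearMap.smul_apply, dotCLML_apply, dotCLM_apply, mulVecCLM_apply,
    smul_eq_mul]
  rw [symm_dot M hM x w, dotProduct_comm w (M *ᵥ x)]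
  ring

end helpers

theorem hessian_of_homogeneous_tensor_form
    (n p K : ℕ) (hp : 1 ≤ p) (hK : 1 ≤ K)
    (A : Fin K → Fin p → Matrix (Fin n) (Fin n) ℝ)
    (hA : ∀ α i, (A α i)ᵀ = A α i)
    (f : (Fin n → ℝ) → ℝ)
    (hf : f = fun x => (1 / 2) * ∑ α : Fin K, ∏ i : Fin p, x ⬝ᵥ (A α i *ᵥ x))
    (D : (Fin n → ℝ) → Matrix (Fin n) (Fin n) ℝ)
    (hD : D = fun x => ∑ α : Fin K, ∑ j : Fin p,
      (∏ i ∈ Finset.univ.erase j, x ⬝ᵥ (A α i *ᵥ x)) • A α j)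
    (H : (Fin n → ℝ) → Matrix (Fin n) (Fin n) ℝ)
    (hH : H = fun x =>
      (2 : ℝ) • (∑ α : Fin K, ∑ j : Fin p, ∑ k ∈ Finset.univ.erase j,
        (∏ i ∈ (Finset.univ.erase j).erase k, x ⬝ᵥ (A α i *ᵥ x)) •
          vecMulVec ((A α k) *ᵥ x) ((A α j) *ᵥ x)) + D x) :
    ContDiff ℝ 2 f ∧
      ∀ (x u w : Fin n → ℝ),
        iteratedFDeriv ℝ 2 f x ![u, w] = u ⬝ᵥ ((H x) *ᵥ w) := by
  -- derivative of each quadratic form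
  have hquad : ∀ (α : Fin K) (i : Fin p) (x : Fin n → ℝ),
      HasFDerivAt (fun y => y ⬝ᵥ (A α i *ᵥ y)) ((2 : ℝ) • dotCLM (A α i *ᵥ x)) x :=
    fun α i x => hasFDerivAt_quad (A α i) (hA α i) x
  constructor
  · -- smoothness
    rw [hf]
    refine contDiff_const.mul (ContDiff.sum fun α _ => contDiff_prod fun i _ => ?_)
    exact (dotCLML (n := n)).isBoundedBilinearMap.contDiff.comp
      (contDiff_id.prodMk (mulVecCLM (A α i)).contDiff)
  · intro x u w
    -- first derivative of f
    have hD1 : ∀ y : Fin n → ℝ, HasFDerivAt f (dotCLM (D y *ᵥ y)) y := by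
      intro y
      have h : HasFDerivAt (fun z => ∑ α : Fin K, ∏ i : Fin p, z ⬝ᵥ (A α i *ᵥ z))
          (∑ α : Fin K, ∑ i : Fin p, (∏ j ∈ Finset.univ.erase i, y ⬝ᵥ (A α j *ᵥ y)) •
            ((2 : ℝ) • dotCLM (A α i *ᵥ y))) y :=
        HasFDerivAt.fun_sum fun α _ => HasFDerivAt.finset_prod fun i _ => hquad α i y
      have h2 := h.const_mul (1 / 2 : ℝ)
      rw [hf]
      refine h2.congr_fderiv ?_
      ext v
      simp only [ContinuousLinearMap.smul_apply, ContinuousLinearMap.sum_apply, dotCLM_apply,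
        smul_eq_mul, hD, sum_mulVec', Matrix.smul_mulVec, sum_dotProduct',
        smul_dotProduct, Finset.mul_sum]
      refine Finset.sum_congr rfl fun α _ => Finset.sum_congr rfl fun j _ => ?_
      ring
    have hfd : fderiv ℝ f = fun y => dotCLML (D y *ᵥ y) :=
      funext fun y => (hD1 y).fderiv
    -- second derivative
    set c : Fin K → Fin p → ℝ :=
      fun α j => ∏ i ∈ Finset.univ.erase j, x ⬝ᵥ (A α i *ᵥ x) with hc
    set c' : Fin K → Fin p → ((Fin n → ℝ) →L[ℝ] ℝ) :=
      fun α j => ∑ k ∈ Finset.univ.erase j,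
        (∏ i ∈ (Finset.univ.erase j).erase k, x ⬝ᵥ (A α i *ᵥ x)) •
          ((2 : ℝ) • dotCLM (A α k *ᵥ x)) with hc'
    have hcd : ∀ (α : Fin K) (j : Fin p),
        HasFDerivAt (fun y => ∏ i ∈ Finset.univ.erase j, y ⬝ᵥ (A α i *ᵥ y)) (c' α j) x :=
      fun α j => HasFDerivAt.finset_prod fun i _ => hquad α i x
    have hterm : ∀ (α : Fin K) (j : Fin p),
        HasFDerivAt (fun y => (∏ i ∈ Finset.univ.erase j, y ⬝ᵥ (A α i *ᵥ y)) • (A α j *ᵥ y))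
          (c α j • mulVecCLM (A α j) + (c' α j).smulRight (A α j *ᵥ x)) x :=
      fun α j => (hcd α j).smul (mulVecCLM (A α j)).hasFDerivAt
    set Ψ : (Fin n → ℝ) →L[ℝ] (Fin n → ℝ) :=
      ∑ α : Fin K, ∑ j : Fin p,
        (c α j • mulVecCLM (A α j) + (c' α j).smulRight (A α j *ᵥ x)) with hΨ
    have hDx : HasFDerivAt (fun y => D y *ᵥ y) Ψ x := by
      have heq : (fun y => D y *ᵥ y) = fun y => ∑ α : Fin K, ∑ j : Fin p,
          (∏ i ∈ Finset.univ.erase j, y ⬝ᵥ (A α i *ᵥ y)) • (A α j *ᵥ y) := by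
        funext y
        rw [hD]
        simp [sum_mulVec', Matrix.smul_mulVec]
      rw [heq, hΨ]
      exact HasFDerivAt.fun_sum fun α _ => HasFDerivAt.fun_sum fun j _ => hterm α j
    have h2 : HasFDerivAt (fderiv ℝ f) ((dotCLML (n := n)).comp Ψ) x := by
      rw [hfd]
      exact (dotCLML (n := n)).hasFDerivAt.comp x hDx
    rw [iteratedFDeriv_two_apply, h2.fderiv]
    show ((dotCLML (n := n)).comp Ψ) (![u, w] 0) (![u, w] 1) = u ⬝ᵥ (H x *ᵥ w)
    simp only [Matrix.cons_val_zero, Matrix.cons_val_one, Matrix.head_cons,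
      ContinuousLinearMap.comp_apply, dotCLML_apply]
    -- expand both sides
    rw [hΨ, hH]
    simp only [ContinuousLinearMap.sum_apply, ContinuousLinearMap.add_apply,
      ContinuousLinearMap.smul_apply, ContinuousLinearMap.smulRight_apply, mulVecCLM_apply,
      dotCLM_apply, smul_eq_mul, hc', Matrix.add_mulVec, Matrix.smul_mulVec,
      sum_mulVec', vecMulVec_mulVec', dotProduct_add, dotProduct_smul, dotProduct_sum',
      sum_dotProduct', add_dotProduct, smul_dotProduct]
    simp only [Finset.sum_add_distrib, Finset.mul_sum, Finset.sum_mul]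
    rw [add_comm]
    congr 1
    · refine Finset.sum_congr rfl fun α _ => Finset.sum_congr rfl fun j _ =>
        Finset.sum_congr rfl fun k _ => ?_
      rw [dotProduct_comm u (A α k *ᵥ x)]
      ring
    · rw [hD]
      simp only [sum_mulVec', Matrix.smul_mulVec, dotProduct_sum', dotProduct_smul,
        smul_eq_mul]
      refine Finset.sum_congr rfl fun α _ => Finset.sum_congr rfl fun j _ => ?_
      rw [symm_dot (A α j) (hA α j) u w]
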